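/- arXiv:2112.00864 — 3 statements merged into one kernel-verified Lean document; each statement's English description precedes it below -/
import Mathlib

section
/- Let A, B be index sets at level ℓ+1 obtained by refining every index of level ℓ (each ω ∈ C_ℓ has a set of children K(ω) with ⋃_{ω' ∈ K(ω)} ω' = ω). Suppose neighbors and interaction lists satisfy: for ω ∈ C_{ℓ+1}, N(ω) ∪ I(ω) = ⋃_{ω'' ∈ N(π(ω))} K(ω'') where π(ω) is the parent of ω and N(ω) ∩ I(ω) = ∅. If level ℓ has no leaves (every cell is refined), then ⋃_{ω ∈ C_ℓ} ω × N(ω) = (⋃_{ω ∈ C_{ℓ+1}} ω × N(ω)) ∪ (⋃_{ω ∈ C_{ℓ+1}} ω × I(ω)), and the two unions on the right are disjoint as subsets of Ω × Ω. -/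
open Set

/-- Splitting of neighbor interactions at a level with no leaves: if every cell of
level `ℓ` is refined into children partitioning it, and for each child the neighbor
and interaction lists satisfy `N(ω) ∪ I(ω) = children of N(π(ω))` with
`N(ω) ∩ I(ω) = ∅`, then
`⋃_{ω ∈ C_ℓ} ω × N(ω) = ⋃_{ω ∈ C_{ℓ+1}} ω × N(ω) ∪ ⋃_{ω ∈ C_{ℓ+1}} ω × I(ω)`,
and the two unions on the right are disjoint. -/
theorem stmt_11 {α ι : Type*} (cell : ι → Set α)
    (Cl Cl1 : Set ι) (K : ι → Set ι) (π : ι → ι) (N I : ι → Set ι)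
    -- every level-ℓ cell is refined: its children partition it
    (hrefine : ∀ ω ∈ Cl, (⋃ ω' ∈ K ω, cell ω') = cell ω)
    -- the next level consists exactly of the children
    (hnext : Cl1 = ⋃ ω ∈ Cl, K ω)
    -- parent structure
    (hpar : ∀ ω ∈ Cl, ∀ ω' ∈ K ω, π ω' = ω)
    -- neighbors plus interaction list of a child are the children of the parent's neighbors
    (hNI : ∀ ω ∈ Cl1, N ω ∪ I ω = ⋃ ω'' ∈ N (π ω), K ω'')
    (hNIdisj : ∀ ω ∈ Cl1, N ω ∩ I ω = ∅)
    -- neighbor lists stay within the level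
    (hNsub : ∀ ω ∈ Cl, N ω ⊆ Cl)
    -- cells of level ℓ+1 are pairwise disjoint
    (hdisj : ∀ ω ∈ Cl1, ∀ ω' ∈ Cl1, ω ≠ ω' → Disjoint (cell ω) (cell ω')) :
    (⋃ ω ∈ Cl, cell ω ×ˢ ⋃ ω' ∈ N ω, cell ω')
      = (⋃ ω ∈ Cl1, cell ω ×ˢ ⋃ ω' ∈ N ω, cell ω')
        ∪ (⋃ ω ∈ Cl1, cell ω ×ˢ ⋃ ω' ∈ I ω, cell ω') ∧
    Disjoint (⋃ ω ∈ Cl1, cell ω ×ˢ ⋃ ω' ∈ N ω, cell ω')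
             (⋃ ω ∈ Cl1, cell ω ×ˢ ⋃ ω' ∈ I ω, cell ω') := by
  have hmem : ∀ c ∈ Cl1, ∃ ω ∈ Cl, c ∈ K ω := by
    intro c hc
    rw [hnext] at hc
    simpa using hc
  have hNIsub : ∀ c ∈ Cl1, N c ∪ I c ⊆ Cl1 := by
    intro c hc d hd
    obtain ⟨ω, hω, hcK⟩ := hmem c hc
    rw [hNI c hc] at hd
    simp only [mem_iUnion] at hd
    obtain ⟨ω'', hω'', hdK⟩ := hd
    rw [hnext]
    have hω''Cl : ω'' ∈ Cl := hNsub ω hω (by rwa [hpar ω hω c hcK] at hω'')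
    exact mem_biUnion hω''Cl hdK
  constructor
  · ext ⟨x, y⟩
    simp only [mem_iUnion, mem_union, mem_prod]
    constructor
    · rintro ⟨ω, hω, hx, ω', hω', hy⟩
      rw [← hrefine ω hω] at hx
      simp only [mem_iUnion] at hx
      obtain ⟨c, hcK, hxc⟩ := hx
      have hcCl1 : c ∈ Cl1 := by rw [hnext]; exact mem_biUnion hω hcK
      have hω'Cl : ω' ∈ Cl := hNsub ω hω hω'
      rw [← hrefine ω' hω'Cl] at hy
      simp only [mem_iUnion] at hy
      obtain ⟨d, hdK, hyd⟩ := hy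
      have hdNI : d ∈ N c ∪ I c := by
        rw [hNI c hcCl1, hpar ω hω c hcK]
        simp only [mem_iUnion]
        exact ⟨ω', hω', hdK⟩
      rcases hdNI with h | h
      · exact Or.inl ⟨c, hcCl1, hxc, d, h, hyd⟩
      · exact Or.inr ⟨c, hcCl1, hxc, d, h, hyd⟩
    · rintro (⟨c, hc, hx, d, hd, hy⟩ | ⟨c, hc, hx, d, hd, hy⟩)
      all_goals
        obtain ⟨ω, hω, hcK⟩ := hmem c hc
        have hdNI : d ∈ ⋃ ω'' ∈ N (π c), K ω'' := by
          rw [← hNI c hc]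
          first | exact Or.inl hd | exact Or.inr hd
        rw [hpar ω hω c hcK] at hdNI
        simp only [mem_iUnion] at hdNI
        obtain ⟨ω', hω', hdK⟩ := hdNI
        have hω'Cl : ω' ∈ Cl := hNsub ω hω hω'
        refine ⟨ω, hω, ?_, ω', hω', ?_⟩
        · rw [← hrefine ω hω]; exact mem_biUnion hcK hx
        · rw [← hrefine ω' hω'Cl]; exact mem_biUnion hdK hy
  · rw [disjoint_left]
    rintro ⟨x, y⟩ h1 h2
    simp only [mem_iUnion, mem_prod] at h1 h2
    obtain ⟨c, hc, hx, d, hd, hy⟩ := h1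
    obtain ⟨c', hc', hx', d', hd', hy'⟩ := h2
    have hcc : c = c' := by
      by_contra hne
      exact (hdisj c hc c' hc' hne).le_bot ⟨hx, hx'⟩
    subst hcc
    have hdCl1 : d ∈ Cl1 := hNIsub c hc (Or.inl hd)
    have hd'Cl1 : d' ∈ Cl1 := hNIsub c hc (Or.inr hd')
    have hdd : d = d' := by
      by_contra hne
      exact (hdisj d hdCl1 d' hd'Cl1 hne).le_bot ⟨hy, hy'⟩
    subst hdd
    have : d ∈ N c ∩ I c := ⟨hd, hd'⟩
    rw [hNIdisj c hc] at this
    exact this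
end

section
/- With the hierarchical cell structure of a boundary-concentrated refinement (each level ℓ cell set C_ℓ partitioned into marked cells M_ℓ, which are refined, and leaves L_ℓ; extended neighbor list N*(ω) = N_M(ω) ∪ ⋃_{ℓ'=0}^{ℓ(ω)} N_L(π_{ℓ'}(ω))), the following set identity holds: ⋃_{ω ∈ M_ℓ} ω × N*(ω) = ⋃_{ω ∈ M_{ℓ+1}} ω × N*(ω) ∪ ⋃_{ω ∈ L_{ℓ+1}} ω × N*(ω) ∪ ⋃_{ω ∈ C_{ℓ+1}} ω × I(ω). -/
open Set

/-- Lemma 3.2 of the paper: with marked cells `M ℓ`, leaves `L ℓ`, `C ℓ = M ℓ ∪ L ℓ`,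
children `K`, ancestors `par`, interaction lists `I` and extended neighbor lists
`Nstar ω = (N ω ∩ M (lvl ω)) ∪ ⋃_{ℓ'≤lvl ω} (N(π_{ℓ'} ω) ∩ L ℓ')`, one has
`⋃_{ω∈M_ℓ} ω × N*(ω) = ⋃_{ω∈M_{ℓ+1}} ω × N*(ω) ∪ ⋃_{ω∈L_{ℓ+1}} ω × N*(ω)
  ∪ ⋃_{ω∈C_{ℓ+1}} ω × I(ω)`. -/
theorem stmt_12 {α ι : Type*} (cell : ι → Set α) (lvl : ι → ℕ)
    (C M L : ℕ → Set ι) (K : ι → Set ι) (N I : ι → Set ι) (par : ℕ → ι → ι)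
    (Nstar : ι → Set ι) (ℓ : ℕ)
    -- each level splits into marked cells and leaves
    (hCML : ∀ m, C m = M m ∪ L m)
    (hMLdisj : ∀ m, M m ∩ L m = ∅)
    -- the next level consists of the children of the marked cells
    (hCnext : ∀ m, C (m + 1) = ⋃ ω ∈ M m, K ω)
    -- level function
    (hlvl : ∀ m, ∀ ω ∈ C m, lvl ω = m)
    -- ancestors: a cell is its own ancestor at its own level,
    (hparself : ∀ ω, par (lvl ω) ω = ω)
    -- and ancestors of a child below its parent's level agree with those of the parent
    (hparchild : ∀ m, ∀ ω ∈ M m, ∀ ω' ∈ K ω, ∀ m' ≤ m, par m' ω' = par m' ω)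
    -- children partition their parent
    (hrefine : ∀ m, ∀ ω ∈ M m, (⋃ ω' ∈ K ω, cell ω') = cell ω)
    -- neighbors plus interaction list of a child are the children of the parent's
    -- marked neighbors
    (hNI : ∀ m, ∀ ω ∈ C (m + 1), N ω ∪ I ω = ⋃ ω'' ∈ N (par m ω) ∩ M m, K ω'')
    (hNIdisj : ∀ ω, N ω ∩ I ω = ∅)
    -- definition of the extended neighbor list
    (hNstar : ∀ ω, Nstar ω
      = (N ω ∩ M (lvl ω)) ∪ ⋃ m ∈ Set.Iic (lvl ω), (N (par m ω) ∩ L m)) :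
    (⋃ ω ∈ M ℓ, cell ω ×ˢ ⋃ ω' ∈ Nstar ω, cell ω')
      = (⋃ ω ∈ M (ℓ + 1), cell ω ×ˢ ⋃ ω' ∈ Nstar ω, cell ω')
        ∪ (⋃ ω ∈ L (ℓ + 1), cell ω ×ˢ ⋃ ω' ∈ Nstar ω, cell ω')
        ∪ (⋃ ω ∈ C (ℓ + 1), cell ω ×ˢ ⋃ ω' ∈ I ω, cell ω') := by

  have hMC : ∀ m, M m ⊆ C m := fun m => by rw [hCML]; exact subset_union_left
  have hKC : ∀ ω ∈ M ℓ, ∀ ω' ∈ K ω, ω' ∈ C (ℓ+1) := by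
    intro ω hω ω' hω'
    rw [hCnext]; exact mem_iUnion₂.mpr ⟨ω, hω, hω'⟩
  have key : ∀ ω ∈ M ℓ, ∀ ω' ∈ K ω,
      ((⋃ w ∈ Nstar ω', cell w) ∪ ⋃ w ∈ I ω', cell w) = ⋃ w ∈ Nstar ω, cell w := by
    intro ω hω ω' hω'
    have hωC : ω ∈ C ℓ := hMC ℓ hω
    have hlω : lvl ω = ℓ := hlvl ℓ ω hωC
    have hω'C : ω' ∈ C (ℓ+1) := hKC ω hω ω' hω'
    have hlω' : lvl ω' = ℓ + 1 := hlvl _ _ hω'C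
    have hparω : ∀ m ≤ ℓ, par m ω' = par m ω := fun m hm => hparchild ℓ ω hω ω' hω' m hm
    have hparℓ : par ℓ ω' = ω := by
      rw [hparω ℓ le_rfl]
      have h := hparself ω; rwa [hlω] at h
    have hpar' : par (ℓ+1) ω' = ω' := by
      have h := hparself ω'; rwa [hlω'] at h
    have hNIω' : N ω' ∪ I ω' = ⋃ w ∈ N ω ∩ M ℓ, K w := by
      have h := hNI ℓ ω' hω'C
      rwa [hparℓ] at h
    ext y
    constructor
    · rintro (hy | hy)
      · rcases mem_iUnion₂.mp hy with ⟨w, hw, hyw⟩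
        rw [hNstar ω', hlω'] at hw
        rcases hw with hw | hw
        · have hw' : w ∈ N ω' ∪ I ω' := Or.inl hw.1
          rw [hNIω'] at hw'
          rcases mem_iUnion₂.mp hw' with ⟨v, hv, hwv⟩
          refine mem_iUnion₂.mpr ⟨v, ?_, ?_⟩
          · rw [hNstar ω, hlω]; exact Or.inl hv
          · rw [← hrefine ℓ v hv.2]
            exact mem_iUnion₂.mpr ⟨w, hwv, hyw⟩
        · rcases mem_iUnion₂.mp hw with ⟨m, hm, hwm⟩
          rcases Nat.lt_or_ge m (ℓ+1) with hlt | hge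
          · have hmℓ : m ≤ ℓ := Nat.lt_succ_iff.mp hlt
            rw [hparω m hmℓ] at hwm
            refine mem_iUnion₂.mpr ⟨w, ?_, hyw⟩
            rw [hNstar ω, hlω]
            exact Or.inr (mem_iUnion₂.mpr ⟨m, Set.mem_Iic.mpr hmℓ, hwm⟩)
          · have hm1 : m = ℓ + 1 := le_antisymm (Set.mem_Iic.mp hm) hge
            subst hm1
            rw [hpar'] at hwm
            have hw' : w ∈ N ω' ∪ I ω' := Or.inl hwm.1
            rw [hNIω'] at hw'
            rcases mem_iUnion₂.mp hw' with ⟨v, hv, hwv⟩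
            refine mem_iUnion₂.mpr ⟨v, ?_, ?_⟩
            · rw [hNstar ω, hlω]; exact Or.inl hv
            · rw [← hrefine ℓ v hv.2]
              exact mem_iUnion₂.mpr ⟨w, hwv, hyw⟩
      · rcases mem_iUnion₂.mp hy with ⟨w, hw, hyw⟩
        have hw' : w ∈ N ω' ∪ I ω' := Or.inr hw
        rw [hNIω'] at hw'
        rcases mem_iUnion₂.mp hw' with ⟨v, hv, hwv⟩
        refine mem_iUnion₂.mpr ⟨v, ?_, ?_⟩
        · rw [hNstar ω, hlω]; exact Or.inl hv
        · rw [← hrefine ℓ v hv.2]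
          exact mem_iUnion₂.mpr ⟨w, hwv, hyw⟩
    · intro hy
      rcases mem_iUnion₂.mp hy with ⟨w, hw, hyw⟩
      rw [hNstar ω, hlω] at hw
      rcases hw with hw | hw
      · rw [← hrefine ℓ w hw.2] at hyw
        rcases mem_iUnion₂.mp hyw with ⟨v, hv, hyv⟩
        have hvNI : v ∈ N ω' ∪ I ω' := by
          rw [hNIω']; exact mem_iUnion₂.mpr ⟨w, hw, hv⟩
        rcases hvNI with hvN | hvI
        · have hvC : v ∈ C (ℓ+1) := hKC w hw.2 v hv
          rw [hCML] at hvC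
          rcases hvC with hvM | hvL
          · refine Or.inl (mem_iUnion₂.mpr ⟨v, ?_, hyv⟩)
            rw [hNstar ω', hlω']; exact Or.inl ⟨hvN, hvM⟩
          · refine Or.inl (mem_iUnion₂.mpr ⟨v, ?_, hyv⟩)
            rw [hNstar ω', hlω']
            refine Or.inr (mem_iUnion₂.mpr ⟨ℓ+1, Set.mem_Iic.mpr le_rfl, ?_⟩)
            rw [hpar']; exact ⟨hvN, hvL⟩
        · exact Or.inr (mem_iUnion₂.mpr ⟨v, hvI, hyv⟩)
      · rcases mem_iUnion₂.mp hw with ⟨m, hm, hwm⟩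
        have hmℓ : m ≤ ℓ := Set.mem_Iic.mp hm
        refine Or.inl (mem_iUnion₂.mpr ⟨w, ?_, hyw⟩)
        rw [hNstar ω', hlω']
        refine Or.inr (mem_iUnion₂.mpr ⟨m, Set.mem_Iic.mpr (hmℓ.trans (Nat.le_succ ℓ)), ?_⟩)
        rw [hparω m hmℓ]; exact hwm
  ext ⟨x, y⟩
  constructor
  · intro hxy
    rcases mem_iUnion₂.mp hxy with ⟨ω, hω, hx, hy⟩
    rw [← hrefine ℓ ω hω] at hx
    rcases mem_iUnion₂.mp hx with ⟨ω', hω', hxω'⟩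
    rw [← key ω hω ω' hω'] at hy
    have hω'C : ω' ∈ C (ℓ+1) := hKC ω hω ω' hω'
    rcases hy with hy | hy
    · have h := hω'C
      rw [hCML] at h
      rcases h with hM | hL
      · exact Or.inl (Or.inl (mem_iUnion₂.mpr ⟨ω', hM, hxω', hy⟩))
      · exact Or.inl (Or.inr (mem_iUnion₂.mpr ⟨ω', hL, hxω', hy⟩))
    · exact Or.inr (mem_iUnion₂.mpr ⟨ω', hω'C, hxω', hy⟩)
  · intro hxy
    have main : ∀ ω' ∈ C (ℓ+1), x ∈ cell ω' →
        y ∈ ((⋃ w ∈ Nstar ω', cell w) ∪ ⋃ w ∈ I ω', cell w) →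
        (x, y) ∈ ⋃ ω ∈ M ℓ, cell ω ×ˢ ⋃ w ∈ Nstar ω, cell w := by
      intro ω' hω'C hx hy
      rw [hCnext] at hω'C
      rcases mem_iUnion₂.mp hω'C with ⟨ω, hω, hω'⟩
      rw [key ω hω ω' hω'] at hy
      refine mem_iUnion₂.mpr ⟨ω, hω, ?_, hy⟩
      rw [← hrefine ℓ ω hω]
      exact mem_iUnion₂.mpr ⟨ω', hω', hx⟩
    rcases hxy with (hxy | hxy) | hxy
    · rcases mem_iUnion₂.mp hxy with ⟨ω', hω', hx, hy⟩
      have hω'C : ω' ∈ C (ℓ+1) := by rw [hCML]; exact Or.inl hω'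
      exact main ω' hω'C hx (Or.inl hy)
    · rcases mem_iUnion₂.mp hxy with ⟨ω', hω', hx, hy⟩
      have hω'C : ω' ∈ C (ℓ+1) := by rw [hCML]; exact Or.inr hω'
      exact main ω' hω'C hx (Or.inl hy)
    · rcases mem_iUnion₂.mp hxy with ⟨ω', hω', hx, hy⟩
      exact main ω' hω' hx (Or.inr hy)
end

section
/- Under the hypotheses of the previous set-decomposition lemma and assuming L_0 could be nonempty, iterating the decomposition from level 0 to the finest level L (where all cells are leaves, L*_L = C_L) yields: Ω × Ω = ⋃_{ℓ=0}^{L} ⋃_{ω ∈ L*_ℓ} ω × N*(ω) ∪ ⋃_{ℓ=0}^{L} ⋃_{ω ∈ C_ℓ} ω × I(ω). -/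
open Set

/-- union of the cells indexed by a set of indices -/
def cellsOf {α ι : Type*} (cell : ι → Set α) (s : Set ι) : Set α := ⋃ ω ∈ s, cell ω

lemma cellsOf_union {α ι : Type*} (cell : ι → Set α) (s t : Set ι) :
    cellsOf cell (s ∪ t) = cellsOf cell s ∪ cellsOf cell t :=
  Set.biUnion_union s t cell

lemma cellsOf_biUnion {α ι κ : Type*} (cell : ι → Set α) (s : Set κ) (t : κ → Set ι) :
    cellsOf cell (⋃ i ∈ s, t i) = ⋃ i ∈ s, cellsOf cell (t i) := by
  ext a; simp [cellsOf]

lemma biUnion_prod_const {α β ι : Type*} (s : Set ι) (f : ι → Set α) (X : Set β) :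
    (⋃ i ∈ s, f i) ×ˢ X = ⋃ i ∈ s, f i ×ˢ X := by
  ext ⟨a, b⟩; simp [Set.mem_prod]; tauto

lemma biUnion_union_distrib {α ι : Type*} (s : Set ι) (f g : ι → Set α) :
    (⋃ i ∈ s, (f i ∪ g i)) = (⋃ i ∈ s, f i) ∪ (⋃ i ∈ s, g i) := by
  ext a
  simp only [Set.mem_iUnion, Set.mem_union]
  constructor
  · rintro ⟨i, hi, h | h⟩
    exacts [Or.inl ⟨i, hi, h⟩, Or.inr ⟨i, hi, h⟩]
  · rintro (⟨i, hi, h⟩ | ⟨i, hi, h⟩)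
    exacts [⟨i, hi, Or.inl h⟩, ⟨i, hi, Or.inr h⟩]

/-- Equation (spaceDecomp:OmOm): iterating the near/far splitting from level `0` to the
finest level `Lmax` gives
`Ω × Ω = ⋃_{ℓ=0}^{Lmax} ⋃_{ω ∈ L*_ℓ} ω × N*(ω) ∪ ⋃_{ℓ=0}^{Lmax} ⋃_{ω ∈ C_ℓ} ω × I(ω)`. -/
theorem stmt_13 {α ι : Type*} (cell : ι → Set α) (lvl : ι → ℕ)
    (C M L Lstar : ℕ → Set ι) (K : ι → Set ι) (N I : ι → Set ι) (par : ℕ → ι → ι)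
    (Nstar : ι → Set ι) (Om : Set α) (Lmax : ℕ)
    (hCML : ∀ m, C m = M m ∪ L m)
    (hMLdisj : ∀ m, M m ∩ L m = ∅)
    (hCnext : ∀ m, C (m + 1) = ⋃ ω ∈ M m, K ω)
    (hlvl : ∀ m, ∀ ω ∈ C m, lvl ω = m)
    (hparself : ∀ ω, par (lvl ω) ω = ω)
    (hparchild : ∀ m, ∀ ω ∈ M m, ∀ ω' ∈ K ω, ∀ m' ≤ m, par m' ω' = par m' ω)
    (hrefine : ∀ m, ∀ ω ∈ M m, (⋃ ω' ∈ K ω, cell ω') = cell ω)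
    (hNI : ∀ m, ∀ ω ∈ C (m + 1), N ω ∪ I ω = ⋃ ω'' ∈ N (par m ω) ∩ M m, K ω'')
    (hNIdisj : ∀ ω, N ω ∩ I ω = ∅)
    (hNstar : ∀ ω, Nstar ω
      = (N ω ∩ M (lvl ω)) ∪ ⋃ m ∈ Set.Iic (lvl ω), (N (par m ω) ∩ L m))
    -- the domain is the union of the level-zero cells
    (hOm : Om = ⋃ ω ∈ C 0, cell ω)
    -- at level zero, neighbors and interaction list of a cell cover the whole level
    (hlevel0 : ∀ ω ∈ C 0, N ω ∪ I ω = C 0)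
    -- `L*_ℓ = L_ℓ` for `ℓ < Lmax` and `L*_{Lmax} = C_{Lmax}`
    (hLstar : ∀ m < Lmax, Lstar m = L m) (hLstarTop : Lstar Lmax = C Lmax) :
    Om ×ˢ Om
      = (⋃ m ∈ Set.Iic Lmax, ⋃ ω ∈ Lstar m, cell ω ×ˢ ⋃ ω' ∈ Nstar ω, cell ω')
        ∪ (⋃ m ∈ Set.Iic Lmax, ⋃ ω ∈ C m, cell ω ×ˢ ⋃ ω' ∈ I ω, cell ω') := by
  have hIic : ∀ m : ℕ, Set.Iic (m + 1) = insert (m + 1) (Set.Iic m) := by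
    intro m; ext x; simp [Set.mem_Iic]; omega
  -- the key refinement step
  have key : ∀ m, ∀ ω ∈ M m,
      cell ω ×ˢ cellsOf cell (Nstar ω)
        = ⋃ ω' ∈ K ω,
            (cell ω' ×ˢ cellsOf cell (Nstar ω') ∪ cell ω' ×ˢ cellsOf cell (I ω')) := by
    intro m ω hω
    have hωC : ω ∈ C m := by rw [hCML]; exact Or.inl hω
    have hlω : lvl ω = m := hlvl m ω hωC
    have hpar : par m ω = ω := by rw [← hlω]; exact hparself ω
    have hchild : ∀ ω' ∈ K ω,
        cellsOf cell (Nstar ω) = cellsOf cell (Nstar ω') ∪ cellsOf cell (I ω') := by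
      intro ω' hω'
      have hω'C : ω' ∈ C (m + 1) := by rw [hCnext]; exact Set.mem_biUnion hω hω'
      have hlω' : lvl ω' = m + 1 := hlvl _ _ hω'C
      have hparm : par m ω' = ω := by rw [hparchild m ω hω ω' hω' m le_rfl, hpar]
      have hNI' : N ω' ∪ I ω' = ⋃ ω'' ∈ N ω ∩ M m, K ω'' := by
        rw [hNI m ω' hω'C, hparm]
      have hNsub : N ω' ⊆ C (m + 1) := by
        intro x hx
        have hx2 : x ∈ ⋃ ω'' ∈ N ω ∩ M m, K ω'' := hNI' ▸ (Set.mem_union_left _ hx)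
        rw [hCnext]
        obtain ⟨ω'', hω'', hxK⟩ := Set.mem_iUnion₂.mp hx2
        exact Set.mem_biUnion hω''.2 hxK
      have hT : (⋃ m' ∈ Set.Iic m, (N (par m' ω') ∩ L m'))
          = ⋃ m' ∈ Set.Iic m, (N (par m' ω) ∩ L m') :=
        Set.iUnion₂_congr fun m' hm' => by
          rw [hparchild m ω hω ω' hω' m' (Set.mem_Iic.mp hm')]
      have hNstarω' : Nstar ω'
          = N ω' ∪ ⋃ m' ∈ Set.Iic m, (N (par m' ω) ∩ L m') := by
        rw [hNstar ω', hlω', hIic m, Set.biUnion_insert]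
        have hp : par (m + 1) ω' = ω' := by rw [← hlω']; exact hparself ω'
        rw [hp, hT, ← Set.union_assoc, ← Set.inter_union_distrib_left, ← hCML (m + 1),
          Set.inter_eq_left.mpr hNsub]
      have hcNM : cellsOf cell (N ω ∩ M m)
          = cellsOf cell (N ω') ∪ cellsOf cell (I ω') := by
        rw [← cellsOf_union, hNI', cellsOf_biUnion]
        simp only [cellsOf]
        exact Set.iUnion₂_congr fun ω'' h => (hrefine m ω'' h.2).symm
      calc cellsOf cell (Nstar ω)
          = cellsOf cell (N ω ∩ M m)
              ∪ cellsOf cell (⋃ m' ∈ Set.Iic m, (N (par m' ω) ∩ L m')) := by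
            rw [hNstar ω, hlω, cellsOf_union]
        _ = (cellsOf cell (N ω') ∪ cellsOf cell (I ω'))
              ∪ cellsOf cell (⋃ m' ∈ Set.Iic m, (N (par m' ω) ∩ L m')) := by rw [hcNM]
        _ = (cellsOf cell (N ω')
              ∪ cellsOf cell (⋃ m' ∈ Set.Iic m, (N (par m' ω) ∩ L m')))
              ∪ cellsOf cell (I ω') := Set.union_right_comm _ _ _
        _ = cellsOf cell (Nstar ω') ∪ cellsOf cell (I ω') := by
            rw [hNstarω', cellsOf_union]
    calc cell ω ×ˢ cellsOf cell (Nstar ω)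
        = (⋃ ω' ∈ K ω, cell ω') ×ˢ cellsOf cell (Nstar ω) := by rw [hrefine m ω hω]
      _ = ⋃ ω' ∈ K ω, cell ω' ×ˢ cellsOf cell (Nstar ω) := biUnion_prod_const _ _ _
      _ = ⋃ ω' ∈ K ω,
            (cell ω' ×ˢ cellsOf cell (Nstar ω') ∪ cell ω' ×ˢ cellsOf cell (I ω')) :=
          Set.iUnion₂_congr fun ω' h => by rw [hchild ω' h, Set.prod_union]
  -- the main invariant
  have main : ∀ m : ℕ,
      Om ×ˢ Om =
        ((⋃ m' ∈ Set.Iic m, ⋃ ω ∈ L m', cell ω ×ˢ cellsOf cell (Nstar ω))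
          ∪ (⋃ m' ∈ Set.Iic m, ⋃ ω ∈ C m', cell ω ×ˢ cellsOf cell (I ω)))
          ∪ (⋃ ω ∈ M m, cell ω ×ˢ cellsOf cell (Nstar ω)) := by
    intro m
    induction m with
    | zero =>
      have hN0 : ∀ ω ∈ C 0, Nstar ω = N ω := by
        intro ω hω
        have hl : lvl ω = 0 := hlvl 0 ω hω
        have hp : par 0 ω = ω := by rw [← hl]; exact hparself ω
        have hsub : N ω ⊆ C 0 := (hlevel0 ω hω) ▸ Set.subset_union_left
        have hIic0 : Set.Iic (0 : ℕ) = {0} := by ext x; simp [Set.mem_Iic]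
        rw [hNstar ω, hl, hIic0, Set.biUnion_singleton, hp,
          ← Set.inter_union_distrib_left, ← hCML 0, Set.inter_eq_left.mpr hsub]
      have hbase : Om ×ˢ Om
          = ⋃ ω ∈ C 0, (cell ω ×ˢ cellsOf cell (Nstar ω) ∪ cell ω ×ˢ cellsOf cell (I ω)) := by
        calc Om ×ˢ Om = ⋃ ω ∈ C 0, cell ω ×ˢ cellsOf cell (C 0) := by
              rw [hOm]; exact biUnion_prod_const _ _ _
          _ = _ := Set.iUnion₂_congr fun ω h => by
              rw [hN0 ω h, ← Set.prod_union, ← cellsOf_union, hlevel0 ω h]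
      rw [hbase, biUnion_union_distrib]
      have hIic0 : Set.Iic (0 : ℕ) = {0} := by ext x; simp [Set.mem_Iic]
      rw [hIic0]
      simp only [Set.biUnion_singleton]
      rw [hCML 0, Set.biUnion_union]
      ext p; simp only [Set.mem_union]; tauto
    | succ m ih =>
      rw [ih]
      have hR : (⋃ ω ∈ M m, cell ω ×ˢ cellsOf cell (Nstar ω))
          = ⋃ ω' ∈ C (m + 1),
              (cell ω' ×ˢ cellsOf cell (Nstar ω') ∪ cell ω' ×ˢ cellsOf cell (I ω')) := by
        rw [hCnext m]
        calc (⋃ ω ∈ M m, cell ω ×ˢ cellsOf cell (Nstar ω))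
            = ⋃ ω ∈ M m, ⋃ ω' ∈ K ω,
                (cell ω' ×ˢ cellsOf cell (Nstar ω') ∪ cell ω' ×ˢ cellsOf cell (I ω')) :=
              Set.iUnion₂_congr fun ω h => key m ω h
          _ = _ := by ext p; simp only [Set.mem_iUnion]; tauto
      rw [hR]
      have hsplit : (⋃ ω' ∈ C (m + 1),
            (cell ω' ×ˢ cellsOf cell (Nstar ω') ∪ cell ω' ×ˢ cellsOf cell (I ω')))
          = ((⋃ ω ∈ L (m + 1), cell ω ×ˢ cellsOf cell (Nstar ω))
              ∪ (⋃ ω ∈ M (m + 1), cell ω ×ˢ cellsOf cell (Nstar ω)))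
              ∪ (⋃ ω ∈ C (m + 1), cell ω ×ˢ cellsOf cell (I ω)) := by
        rw [biUnion_union_distrib]
        congr 1
        rw [hCML (m + 1), Set.biUnion_union, Set.union_comm]
      rw [hsplit, hIic m]
      simp only [Set.biUnion_insert]
      ext p; simp only [Set.mem_union]; tauto
  -- conclude
  rw [main Lmax]
  have hIicTop : Set.Iic Lmax = insert Lmax (Set.Iio Lmax) := by
    ext x; simp only [Set.mem_insert_iff, Set.mem_Iic, Set.mem_Iio]; omega
  have hLnear : (⋃ m' ∈ Set.Iio Lmax, ⋃ ω ∈ Lstar m', cell ω ×ˢ cellsOf cell (Nstar ω))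
      = ⋃ m' ∈ Set.Iio Lmax, ⋃ ω ∈ L m', cell ω ×ˢ cellsOf cell (Nstar ω) :=
    Set.iUnion₂_congr fun m' hm' => by rw [hLstar m' (Set.mem_Iio.mp hm')]
  have htop : (⋃ ω ∈ Lstar Lmax, cell ω ×ˢ cellsOf cell (Nstar ω))
      = (⋃ ω ∈ L Lmax, cell ω ×ˢ cellsOf cell (Nstar ω))
        ∪ (⋃ ω ∈ M Lmax, cell ω ×ˢ cellsOf cell (Nstar ω)) := by
    rw [hLstarTop, hCML Lmax, Set.biUnion_union, Set.union_comm]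
  simp only [cellsOf] at *
  rw [hIicTop]
  simp only [Set.biUnion_insert]
  rw [htop, hLnear]
  ext p; simp only [Set.mem_union]; tauto
end
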